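/- Let 𝒮 be a block algebra of dimension s² (isomorphic to Mat_s(ℂ)). For every X ∈ Mat_{k×ℓ}(𝒮), one has (1/s)‖X‖² ≤ Σ_{i=1}^k Σ_{j=1}^ℓ ‖X(i,j)‖² ≤ s·min(k,ℓ)·‖X‖², where ‖X‖ is the C*-norm of X regarded as a matrix over 𝒮 and ‖X(i,j)‖ the C*-norm of each entry. -/

import Mathlib

open scoped Matrix.Norms.L2Operator
open Matrix

/-- Operator norm (largest singular value) of a rectangular complex matrix. -/
noncomputable def matOpNorm {m n : Type*} [Fintype m] [Fintype n] [DecidableEq n]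
    (X : Matrix m n ℂ) : ℝ :=
  ‖LinearMap.toContinuousLinearMap (Matrix.toEuclideanLin X)‖

section aux
variable {m n : Type*} [Fintype m] [Fintype n] [DecidableEq n]

lemma matOpNorm_eq (X : Matrix m n ℂ) : matOpNorm X = ‖X‖ := rfl

lemma matOpNorm_nonneg (X : Matrix m n ℂ) : 0 ≤ matOpNorm X := norm_nonneg _

lemma matOpNorm_conjTranspose [DecidableEq m] (X : Matrix m n ℂ) :
    matOpNorm Xᴴ = matOpNorm X := by
  rw [matOpNorm_eq, matOpNorm_eq, Matrix.l2_opNorm_conjTranspose]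

lemma sum_col_sq_le (X : Matrix m n ℂ) (q : n) :
    ∑ p, ‖X p q‖ ^ 2 ≤ matOpNorm X ^ 2 := by
  have h := (LinearMap.toContinuousLinearMap (Matrix.toEuclideanLin X)).le_opNorm
    (EuclideanSpace.single q (1 : ℂ))
  rw [EuclideanSpace.norm_single] at h
  simp only [norm_one, mul_one] at h
  have hx : (LinearMap.toContinuousLinearMap (Matrix.toEuclideanLin X))
      (EuclideanSpace.single q (1 : ℂ)) = (WithLp.equiv 2 (m → ℂ)).symm (fun p => X p q) := by
    ext p
    simp only [LinearMap.coe_toContinuousLinearMap', Matrix.toEuclideanLin_apply,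
      WithLp.equiv_symm_apply, WithLp.ofLp_toLp]
    rw [show (EuclideanSpace.single q (1 : ℂ)).ofLp = Pi.single q 1 from rfl,
      Matrix.mulVec_single]
    exact mul_one _
  rw [hx] at h
  have hn : ‖(WithLp.equiv 2 (m → ℂ)).symm (fun p => X p q)‖
      = Real.sqrt (∑ p, ‖X p q‖ ^ 2) := by
    rw [EuclideanSpace.norm_eq]
    simp only [WithLp.equiv_symm_apply, WithLp.ofLp_toLp]
  rw [hn] at h
  calc ∑ p, ‖X p q‖ ^ 2 = Real.sqrt (∑ p, ‖X p q‖ ^ 2) ^ 2 := by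
        rw [Real.sq_sqrt]
        positivity
    _ ≤ matOpNorm X ^ 2 := by
        apply pow_le_pow_left₀ (Real.sqrt_nonneg _) h

lemma sum_row_sq_le [DecidableEq m] (X : Matrix m n ℂ) (p : m) :
    ∑ q, ‖X p q‖ ^ 2 ≤ matOpNorm X ^ 2 := by
  have h := sum_col_sq_le Xᴴ p
  rw [matOpNorm_conjTranspose] at h
  simpa [Matrix.conjTranspose_apply] using h

lemma matOpNorm_sq_le_frob (X : Matrix m n ℂ) :
    matOpNorm X ^ 2 ≤ ∑ p, ∑ q, ‖X p q‖ ^ 2 := by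
  set F := ∑ p, ∑ q, ‖X p q‖ ^ 2 with hF
  have hF0 : (0:ℝ) ≤ F := by positivity
  have hb : matOpNorm X ≤ Real.sqrt F := by
    apply ContinuousLinearMap.opNorm_le_bound _ (Real.sqrt_nonneg F)
    intro x
    have hx2 : ‖(LinearMap.toContinuousLinearMap (Matrix.toEuclideanLin X)) x‖ ^ 2
        ≤ F * ‖x‖ ^ 2 := by
      have hnorm : ‖(LinearMap.toContinuousLinearMap (Matrix.toEuclideanLin X)) x‖ ^ 2
          = ∑ p, ‖∑ q, X p q * x q‖ ^ 2 := by
        rw [EuclideanSpace.norm_eq, Real.sq_sqrt (by positivity)]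
        refine Finset.sum_congr rfl fun p _ => ?_
        congr 1
      have hxnorm : ‖x‖ ^ 2 = ∑ q, ‖x q‖ ^ 2 := by
        rw [EuclideanSpace.norm_eq, Real.sq_sqrt (by positivity)]
      rw [hnorm, hxnorm, hF, Finset.sum_mul]
      refine Finset.sum_le_sum fun p _ => ?_
      calc ‖∑ q, X p q * x q‖ ^ 2 ≤ (∑ q, ‖X p q‖ * ‖x q‖) ^ 2 := by
            apply pow_le_pow_left₀ (norm_nonneg _)
            refine (norm_sum_le _ _).trans (le_of_eq ?_)
            exact Finset.sum_congr rfl fun q _ => norm_mul _ _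
        _ ≤ (∑ q, ‖X p q‖ ^ 2) * ∑ q, ‖x q‖ ^ 2 :=
            Finset.sum_mul_sq_le_sq_mul_sq _ _ _
    calc ‖(LinearMap.toContinuousLinearMap (Matrix.toEuclideanLin X)) x‖
        = Real.sqrt (‖(LinearMap.toContinuousLinearMap (Matrix.toEuclideanLin X)) x‖ ^ 2) := by
          rw [Real.sqrt_sq (norm_nonneg _)]
      _ ≤ Real.sqrt (F * ‖x‖ ^ 2) := Real.sqrt_le_sqrt hx2
      _ = Real.sqrt F * ‖x‖ := by
          rw [Real.sqrt_mul hF0, Real.sqrt_sq (norm_nonneg _)]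
  calc matOpNorm X ^ 2 ≤ Real.sqrt F ^ 2 := pow_le_pow_left₀ (matOpNorm_nonneg _) hb 2
    _ = F := Real.sq_sqrt hF0

end aux

theorem block_hilbert_schmidt_comparison (s k ℓ : ℕ) (hs : 0 < s)
    (X : Matrix (Fin k × Fin s) (Fin ℓ × Fin s) ℂ) :
    (1 / (s : ℝ)) * matOpNorm X ^ 2 ≤
      (∑ i : Fin k, ∑ j : Fin ℓ,
        matOpNorm (Matrix.of fun a b : Fin s => X (i, a) (j, b)) ^ 2) ∧
    (∑ i : Fin k, ∑ j : Fin ℓ,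
        matOpNorm (Matrix.of fun a b : Fin s => X (i, a) (j, b)) ^ 2) ≤
      (s : ℝ) * (min k ℓ : ℕ) * matOpNorm X ^ 2 := by
  have hs' : (0:ℝ) < s := by exact_mod_cast hs
  set B : Fin k → Fin ℓ → Matrix (Fin s) (Fin s) ℂ :=
    fun i j => Matrix.of fun a b : Fin s => X (i, a) (j, b) with hB
  set F : ℝ := ∑ p, ∑ q, ‖X p q‖ ^ 2 with hF
  have hfrob : F = ∑ i : Fin k, ∑ j : Fin ℓ, ∑ a : Fin s, ∑ b : Fin s, ‖B i j a b‖ ^ 2 := by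
    rw [hF]
    simp only [Fintype.sum_prod_type]
    exact Finset.sum_congr rfl fun i _ => Finset.sum_comm
  constructor
  · -- lower bound
    have h1 : matOpNorm X ^ 2 ≤ F := matOpNorm_sq_le_frob X
    have h2 : ∀ i j, ∑ a, ∑ b, ‖B i j a b‖ ^ 2 ≤ (s:ℝ) * matOpNorm (B i j) ^ 2 := by
      intro i j
      calc ∑ a, ∑ b, ‖B i j a b‖ ^ 2 = ∑ b, ∑ a, ‖B i j a b‖ ^ 2 := Finset.sum_comm
        _ ≤ ∑ _b : Fin s, matOpNorm (B i j) ^ 2 :=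
            Finset.sum_le_sum fun b _ => sum_col_sq_le (B i j) b
        _ = (s:ℝ) * matOpNorm (B i j) ^ 2 := by
            simp [Finset.sum_const, mul_comm]
    have h3 : F ≤ (s:ℝ) * ∑ i, ∑ j, matOpNorm (B i j) ^ 2 := by
      rw [hfrob, Finset.mul_sum]
      refine Finset.sum_le_sum fun i _ => ?_
      rw [Finset.mul_sum]
      exact Finset.sum_le_sum fun j _ => h2 i j
    calc (1 / (s:ℝ)) * matOpNorm X ^ 2 ≤ (1 / (s:ℝ)) * F := by
          apply mul_le_mul_of_nonneg_left h1 (by positivity)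
      _ ≤ (1 / (s:ℝ)) * ((s:ℝ) * ∑ i, ∑ j, matOpNorm (B i j) ^ 2) := by
          apply mul_le_mul_of_nonneg_left h3 (by positivity)
      _ = ∑ i, ∑ j, matOpNorm (B i j) ^ 2 := by
          field_simp
  · -- upper bound
    have h1 : (∑ i, ∑ j, matOpNorm (B i j) ^ 2) ≤ F := by
      rw [hfrob]
      exact Finset.sum_le_sum fun i _ => Finset.sum_le_sum fun j _ =>
        matOpNorm_sq_le_frob (B i j)
    have hrow : F ≤ ((k:ℝ) * s) * matOpNorm X ^ 2 := by
      calc F ≤ ∑ _p : Fin k × Fin s, matOpNorm X ^ 2 :=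
            Finset.sum_le_sum fun p _ => sum_row_sq_le X p
        _ = ((k:ℝ) * s) * matOpNorm X ^ 2 := by
            simp [Finset.sum_const, Fintype.card_prod, mul_comm, mul_assoc]
    have hcol : F ≤ ((ℓ:ℝ) * s) * matOpNorm X ^ 2 := by
      have : F = ∑ q, ∑ p, ‖X p q‖ ^ 2 := Finset.sum_comm
      rw [this]
      calc (∑ q : Fin ℓ × Fin s, ∑ p, ‖X p q‖ ^ 2)
          ≤ ∑ _q : Fin ℓ × Fin s, matOpNorm X ^ 2 :=
            Finset.sum_le_sum fun q _ => sum_col_sq_le X q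
        _ = ((ℓ:ℝ) * s) * matOpNorm X ^ 2 := by
            simp [Finset.sum_const, Fintype.card_prod, mul_comm, mul_assoc]
    rcases le_total k ℓ with h | h
    · have : min k ℓ = k := min_eq_left h
      rw [this]
      refine h1.trans (hrow.trans (le_of_eq ?_))
      ring
    · have : min k ℓ = ℓ := min_eq_right h
      rw [this]
      refine h1.trans (hcol.trans (le_of_eq ?_))
      ring
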